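/- Let T̂_• and T̂_∘ be hierarchical meshes with T̂_∘ finer than T̂_• (i.e., Ω̂_•^k ⊆ Ω̂_∘^k for all k ∈ ℕ₀). Then for every hierarchical B-spline β̂_∘ ∈ Ĥ_∘ there exists a hierarchical B-spline β̂_• ∈ Ĥ_• with supp(β̂_∘) ⊆ supp(β̂_•). -/
import Mathlib


/- Support monotonicity lemma: if the hierarchical mesh with domains `Ω∘` is finer than
the one with domains `Ω•` (i.e. `Ω•^k ⊆ Ω∘^k` for all `k`), then for every hierarchical
B-spline `β∘ ∈ Ĥ∘` there exists `β• ∈ Ĥ•` with `supp(β∘) ⊆ supp(β•)`.  The hierarchical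
basis of a domain hierarchy `Ω` is characterized as
`Ĥ(Ω) = ⋃_k {β ∈ B̂^k : supp β ⊆ Ω^k ∧ supp β ⊄ Ω^{k+1}}`. -/
theorem support_monotonicity {X Spline : Type}
    (supp : Spline → Set X)
    (B : ℕ → Set Spline)                 -- the nested tensor-product B-spline bases `B̂^k`
    (Ωb Ωo : ℕ → Set X)                  -- domain hierarchies of `T̂_•` and `T̂_∘`
    (hb0 : Ωb 0 = Set.univ)
    (hbdec : ∀ k, Ωb (k + 1) ⊆ Ωb k)
    (hodec : ∀ k, Ωo (k + 1) ⊆ Ωo k)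
    -- `T̂_∘` is finer than `T̂_•`:
    (hfiner : ∀ k, Ωb k ⊆ Ωo k)
    -- every level-`(k+1)` B-spline has its support inside the support of some
    -- level-`k` B-spline:
    (hcoarse : ∀ k, ∀ β ∈ B (k + 1), ∃ β' ∈ B k, supp β ⊆ supp β') :
    ∀ β : Spline,
      (∃ k, β ∈ B k ∧ supp β ⊆ Ωo k ∧ ¬ supp β ⊆ Ωo (k + 1)) →
      ∃ β' : Spline,
        (∃ k, β' ∈ B k ∧ supp β' ⊆ Ωb k ∧ ¬ supp β' ⊆ Ωb (k + 1)) ∧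
        supp β ⊆ supp β' := by
  have key : ∀ k, ∀ β ∈ B k, ¬ supp β ⊆ Ωb (k + 1) →
      ∃ β' : Spline,
        (∃ j, β' ∈ B j ∧ supp β' ⊆ Ωb j ∧ ¬ supp β' ⊆ Ωb (j + 1)) ∧
        supp β ⊆ supp β' := by
    intro k
    induction k with
    | zero =>
      intro β hβ hn
      exact ⟨β, ⟨0, hβ, by simp [hb0], hn⟩, subset_rfl⟩
    | succ k ih =>
      intro β hβ hn
      by_cases h : supp β ⊆ Ωb (k + 1)
      · exact ⟨β, ⟨k + 1, hβ, h, hn⟩, subset_rfl⟩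
      · obtain ⟨β'', hβ'', hsub⟩ := hcoarse k β hβ
        have hn'' : ¬ supp β'' ⊆ Ωb (k + 1) := fun h' => h (hsub.trans h')
        obtain ⟨β', hmem, hsub'⟩ := ih β'' hβ'' hn''
        exact ⟨β', hmem, hsub.trans hsub'⟩
  rintro β ⟨k, hβ, _, hno⟩
  exact key k β hβ (fun h => hno (h.trans (hfiner (k + 1))))
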